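/- Let $1 < p < 2 < q$ and set $\beta/2 = 1/p - 1/q - 1/2$ with $\beta \geq 0$. Suppose the commutator $C_b$ is bounded from $L^p(\mathbb{C})$ to $L^q(\mathbb{C})$ with norm $K$. Then for every square $Q \subseteq \mathbb{C}$, $\fint_Q |b(x) - b_Q|\,dx \leq C K |Q|^{\beta/2}$ for a dimensional constant $C$. -/

import Mathlib

open MeasureTheory ENNReal

noncomputable section

/-- The commutator of the Cauchy transform. -/
def cauchyComm (b f : ℂ → ℂ) (z : ℂ) : ℂ :=
  ∫ w, (b z - b w) / (z - w) * f w

/-- The half-open axis-parallel square in `ℂ` with lower-left corner `c`, side `ℓ`. -/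
def square (c : ℂ) (ℓ : ℝ) : Set ℂ :=
  {z | (c.re ≤ z.re ∧ z.re < c.re + ℓ) ∧ (c.im ≤ z.im ∧ z.im < c.im + ℓ)}

/-- The average `b_Q = ⨍_Q b`. -/
def sqAvg (b : ℂ → ℂ) (Q : Set ℂ) : ℂ :=
  (volume Q).toReal⁻¹ • ∫ z in Q, b z

section Aux
open Set Metric

lemma riesz_bound (R : ℝ) : ∃ M : ℝ≥0∞, M < ⊤ ∧ ∀ a : ℂ,
    ∫⁻ x in Metric.ball a R, ((‖x - a‖₊ : ℝ≥0∞))⁻¹ ≤ M := by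
  rcases le_or_gt R 0 with hR | hR
  · exact ⟨0, zero_lt_top, fun a => by rw [Metric.ball_eq_empty.2 hR]; simp⟩
  have hfin2 : ∫⁻ t in Ioi R⁻¹, ENNReal.ofReal (t⁻¹) ^ 2 < ⊤ := by
    have hint : IntegrableOn (fun t : ℝ => t ^ (-2 : ℝ)) (Ioi R⁻¹) :=
      integrableOn_Ioi_rpow_of_lt (by norm_num) (inv_pos.2 hR)
    refine lt_of_le_of_lt ?_ hint.2
    refine setLIntegral_mono' measurableSet_Ioi (fun t ht => ?_)
    have ht' : (0:ℝ) < t := lt_trans (inv_pos.2 hR) ht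
    have he : ENNReal.ofReal (t⁻¹) ^ 2 = ENNReal.ofReal (t ^ (-2:ℝ)) := by
      rw [← ENNReal.ofReal_pow (inv_nonneg.2 ht'.le)]
      congr 1
      rw [Real.rpow_neg ht'.le, inv_pow]
      congr 1
      rw [← Real.rpow_natCast t 2]
      norm_num
    rw [he]
    exact Real.ofReal_le_enorm _
  refine ⟨(ENNReal.ofReal R ^ 2 * NNReal.pi) * volume (Ioc (0:ℝ) R⁻¹)
    + (∫⁻ t in Ioi R⁻¹, ENNReal.ofReal (t⁻¹) ^ 2) * NNReal.pi, ?_, ?_⟩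
  · refine ENNReal.add_lt_top.2 ⟨?_, ?_⟩
    · refine ENNReal.mul_lt_top (ENNReal.mul_lt_top ?_ coe_lt_top) ?_
      · exact pow_lt_top ofReal_lt_top
      · simp [Real.volume_Ioc]
    · exact ENNReal.mul_lt_top hfin2 coe_lt_top
  intro a
  have hae : ∀ᵐ x : ℂ ∂(volume.restrict (Metric.ball a R)), x ≠ a := by
    refine ae_restrict_of_ae ?_
    have h0 : (volume : Measure ℂ) {a} = 0 := measure_singleton a
    filter_upwards [measure_eq_zero_iff_ae_notMem.mp h0] with x hx
    simpa using hx
  have h1 : ∫⁻ x in Metric.ball a R, (‖x - a‖₊ : ℝ≥0∞)⁻¹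
      = ∫⁻ x in Metric.ball a R, ENNReal.ofReal (‖x - a‖⁻¹) := by
    refine lintegral_congr_ae ?_
    filter_upwards [hae] with x hx
    have hx' : (0:ℝ) < ‖x - a‖ := by
      rw [norm_pos_iff]; exact sub_ne_zero.2 hx
    rw [ENNReal.ofReal_inv_of_pos hx', ofReal_norm, enorm_eq_nnnorm]
  rw [h1, lintegral_eq_lintegral_meas_lt _
    (ae_of_all _ fun x => inv_nonneg.2 (norm_nonneg _))
    (((measurable_id.sub measurable_const).norm.inv).aemeasurable)]
  have hsub : ∀ t : ℝ, 0 < t → {x : ℂ | t < ‖x - a‖⁻¹} ⊆ Metric.ball a t⁻¹ := by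
    intro t ht x hx
    simp only [Set.mem_setOf_eq] at hx
    rcases eq_or_ne x a with rfl | h0
    · simpa using inv_pos.2 ht
    · have hna : (0:ℝ) < ‖x - a‖ := by rw [norm_pos_iff]; exact sub_ne_zero.2 h0
      have : ‖x - a‖ < t⁻¹ := by
        calc ‖x - a‖ = (‖x - a‖⁻¹)⁻¹ := (inv_inv _).symm
        _ < t⁻¹ := inv_strictAnti₀ ht hx
      simpa [Metric.mem_ball, dist_eq_norm] using this
  have hbound : ∫⁻ t in Ioi (0:ℝ),
      (volume.restrict (Metric.ball a R)) {x : ℂ | t < ‖x - a‖⁻¹}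
      ≤ (∫⁻ _ in Ioc (0:ℝ) R⁻¹, (ENNReal.ofReal R ^ 2 * NNReal.pi : ℝ≥0∞))
        + ∫⁻ t in Ioi R⁻¹, ENNReal.ofReal (t⁻¹) ^ 2 * NNReal.pi := by
    have hU : Ioi (0:ℝ) ⊆ Ioc (0:ℝ) R⁻¹ ∪ Ioi R⁻¹ := by
      intro t ht; rcases le_or_gt t R⁻¹ with h | h
      · exact Or.inl ⟨ht, h⟩
      · exact Or.inr h
    refine le_trans (lintegral_mono_set hU) (le_trans (lintegral_union_le _ _ _) ?_)
    refine add_le_add ?_ ?_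
    · refine setLIntegral_mono' measurableSet_Ioc (fun t ht => ?_)
      calc (volume.restrict (Metric.ball a R)) {x : ℂ | t < ‖x - a‖⁻¹}
          ≤ volume (Metric.ball a R) := by
            rw [Measure.restrict_apply₀' measurableSet_ball.nullMeasurableSet]
            exact measure_mono inter_subset_right
        _ = ENNReal.ofReal R ^ 2 * NNReal.pi := Complex.volume_ball a R
    · refine setLIntegral_mono' measurableSet_Ioi (fun t ht => ?_)
      have ht0 : (0:ℝ) < t := lt_trans (inv_pos.2 hR) ht
      calc (volume.restrict (Metric.ball a R)) {x : ℂ | t < ‖x - a‖⁻¹}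
          ≤ volume (Metric.ball a t⁻¹) := by
            refine le_trans (le_of_eq (Measure.restrict_apply₀'
              measurableSet_ball.nullMeasurableSet)) ?_
            exact measure_mono (inter_subset_left.trans (hsub t ht0))
        _ = ENNReal.ofReal (t⁻¹) ^ 2 * NNReal.pi := Complex.volume_ball a _
  refine le_trans hbound (le_of_eq ?_)
  rw [setLIntegral_const, lintegral_mul_const' _ _ coe_ne_top]


lemma square_eq_preimage (c : ℂ) (ℓ : ℝ) :
    square c ℓ = Complex.measurableEquivRealProd ⁻¹'
      ((Ico c.re (c.re+ℓ)) ×ˢ (Ico c.im (c.im+ℓ))) := by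
  ext z
  simp [square, Complex.measurableEquivRealProd, Complex.equivRealProd, and_assoc]

lemma measurableSet_square (c : ℂ) (ℓ : ℝ) : MeasurableSet (square c ℓ) := by
  rw [square_eq_preimage]
  exact (measurableSet_Ico.prod measurableSet_Ico).preimage
    Complex.measurableEquivRealProd.measurable

lemma volume_square (c : ℂ) (ℓ : ℝ) (hℓ : 0 < ℓ) :
    volume (square c ℓ) = ENNReal.ofReal (ℓ * ℓ) := by
  rw [square_eq_preimage,
    Complex.volume_preserving_equiv_real_prod.measure_preimage
      ((measurableSet_Ico.prod measurableSet_Ico).nullMeasurableSet)]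
  simp [← Measure.volume_eq_prod, Measure.volume_eq_prod, Measure.prod_prod,
    Real.volume_Ico, ENNReal.ofReal_mul hℓ.le]

lemma norm_sub_le_of_mem_square {c z : ℂ} {ℓ : ℝ} (hz : z ∈ square c ℓ) :
    ‖z - c‖ ≤ 2 * ℓ := by
  obtain ⟨⟨h1, h2⟩, h3, h4⟩ := hz
  calc ‖z - c‖ ≤ |(z-c).re| + |(z-c).im| := Complex.norm_le_abs_re_add_abs_im _
    _ ≤ ℓ + ℓ := by
        refine add_le_add ?_ ?_ <;> rw [abs_le] <;> constructor <;>
          simp [Complex.sub_re, Complex.sub_im] <;> linarith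
    _ = 2 * ℓ := by ring

lemma square_subset_ball {c z : ℂ} {ℓ : ℝ} (hℓ : 0 < ℓ) (hz : z ∈ square c ℓ) :
    square c ℓ ⊆ Metric.ball z (5 * ℓ) := by
  intro y hy
  have h1 := norm_sub_le_of_mem_square hz
  have h2 := norm_sub_le_of_mem_square hy
  have : ‖y - z‖ ≤ 4 * ℓ := by
    calc ‖y - z‖ = ‖(y - c) - (z - c)‖ := by ring_nf
      _ ≤ ‖y - c‖ + ‖z - c‖ := norm_sub_le _ _
      _ ≤ 4 * ℓ := by linarith
  rw [Metric.mem_ball, dist_eq_norm]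
  linarith

lemma integrableOn_square {b : ℂ → ℂ} (hb : LocallyIntegrable b volume)
    (c : ℂ) (ℓ : ℝ) (hℓ : 0 < ℓ) : IntegrableOn b (square c ℓ) := by
  refine (hb.integrableOn_isCompact (isCompact_closedBall c (5*ℓ))).mono_set ?_
  intro z hz
  have := norm_sub_le_of_mem_square hz
  rw [Metric.mem_closedBall, dist_eq_norm]
  linarith

lemma ae_kernel_integrable {b : ℂ → ℂ} (hb : LocallyIntegrable b volume)
    (c : ℂ) (ℓ : ℝ) (hℓ : 0 < ℓ) :
    ∀ᵐ x ∂(volume.restrict (square c ℓ)),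
      IntegrableOn (fun y => (b x - b y) / (x - y)) (square c ℓ) := by
  set Q := square c ℓ with hQdef
  have hQm : MeasurableSet Q := measurableSet_square c ℓ
  obtain ⟨M, hM, hMb⟩ := riesz_bound (5 * ℓ)
  -- step A : for x ∈ Q, the inverse kernel is integrable on Q
  have hinv : ∀ x ∈ Q, IntegrableOn (fun y => (x - y)⁻¹) Q := by
    intro x hx
    constructor
    · exact ((measurable_const.sub measurable_id).inv).aestronglyMeasurable
    · show (∫⁻ y in Q, (‖(x - y)⁻¹‖₊ : ℝ≥0∞)) < ⊤
      calc ∫⁻ y in Q, (‖(x - y)⁻¹‖₊ : ℝ≥0∞)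
          ≤ ∫⁻ y in Metric.ball x (5*ℓ), (‖(x - y)⁻¹‖₊ : ℝ≥0∞) :=
            lintegral_mono_set (square_subset_ball hℓ hx)
        _ ≤ ∫⁻ y in Metric.ball x (5*ℓ), ((‖y - x‖₊ : ℝ≥0∞))⁻¹ := by
            refine lintegral_mono (fun y => ?_)
            rcases eq_or_ne y x with rfl | hne
            · simp
            · have h0 : ‖y - x‖₊ ≠ 0 := by
                simpa [nnnorm_eq_zero] using sub_ne_zero.2 hne
              rw [← ENNReal.coe_inv h0, ENNReal.coe_le_coe, nnnorm_inv]
              simp only [← norm_toNNReal, norm_sub_rev]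
              exact le_rfl
        _ ≤ M := hMb x
        _ < ⊤ := hM
  -- step B
  have hb' := hb.aestronglyMeasurable
  set b' := hb'.mk b with hb'def
  have hbb' : b =ᵐ[volume] b' := hb'.ae_eq_mk
  have hb'm : StronglyMeasurable b' := hb'.stronglyMeasurable_mk
  have hbQ : IntegrableOn b Q := integrableOn_square hb c ℓ hℓ
  have hb'Q : IntegrableOn b' Q := hbQ.congr (ae_restrict_of_ae hbb')
  set F : ℂ → ℂ → ℝ≥0∞ := fun x y => (‖b' y‖₊ : ℝ≥0∞) * ((‖x - y‖₊ : ℝ≥0∞))⁻¹ with hFdef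
  have hFm : Measurable (Function.uncurry F) := by
    apply Measurable.mul
    · exact (hb'm.measurable.comp measurable_snd).nnnorm.coe_nnreal_ennreal
    · exact ((measurable_fst.sub measurable_snd).nnnorm.coe_nnreal_ennreal).inv
  have hswap : ∫⁻ x in Q, ∫⁻ y in Q, F x y = ∫⁻ y in Q, ∫⁻ x in Q, F x y :=
    lintegral_lintegral_swap hFm.aemeasurable
  have hiter : ∫⁻ x in Q, ∫⁻ y in Q, F x y < ⊤ := by
    rw [hswap]
    calc ∫⁻ y in Q, ∫⁻ x in Q, F x y
        ≤ ∫⁻ y in Q, (‖b' y‖₊ : ℝ≥0∞) * M := by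
          refine setLIntegral_mono' hQm (fun y hy => ?_)
          rw [hFdef]
          simp only
          rw [lintegral_const_mul' _ _ coe_ne_top]
          gcongr
          calc ∫⁻ x in Q, ((‖x - y‖₊ : ℝ≥0∞))⁻¹
              ≤ ∫⁻ x in Metric.ball y (5*ℓ), ((‖x - y‖₊ : ℝ≥0∞))⁻¹ :=
                lintegral_mono_set (square_subset_ball hℓ hy)
            _ ≤ M := hMb y
      _ = (∫⁻ y in Q, (‖b' y‖₊ : ℝ≥0∞)) * M := lintegral_mul_const' _ _ hM.ne
      _ < ⊤ := ENNReal.mul_lt_top hb'Q.2 hM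
  have hae2 : ∀ᵐ x ∂volume.restrict Q, ∫⁻ y in Q, F x y < ⊤ :=
    ae_lt_top (hFm.lintegral_prod_right') hiter.ne
  filter_upwards [hae2, ae_restrict_mem hQm] with x hx1 hx2
  have h2 : IntegrableOn (fun y => b y * (x - y)⁻¹) Q := by
    constructor
    · exact (hb.aestronglyMeasurable.restrict).mul
        ((measurable_const.sub measurable_id).inv).aestronglyMeasurable
    · show (∫⁻ y in Q, (‖b y * (x - y)⁻¹‖₊ : ℝ≥0∞)) < ⊤
      refine lt_of_le_of_lt (lintegral_mono_ae ?_) hx1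
      filter_upwards [ae_restrict_of_ae hbb'] with y hy
      rw [hFdef]
      simp only [nnnorm_mul, ENNReal.coe_mul, hy]
      gcongr
      rcases eq_or_ne x y with rfl | hne
      · simp
      · have h0 : ‖x - y‖₊ ≠ 0 := by
          simpa [nnnorm_eq_zero] using sub_ne_zero.2 hne
        rw [← ENNReal.coe_inv h0, ENNReal.coe_le_coe, nnnorm_inv]
  have h1 : IntegrableOn (fun y => b x * (x - y)⁻¹) Q := (hinv x hx2).const_mul (b x)
  refine (h1.sub h2).congr ?_
  refine ae_of_all _ (fun y => ?_)
  simp only [Pi.sub_apply]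
  rw [div_eq_mul_inv, sub_mul]

lemma cauchyComm_indicator (b g : ℂ → ℂ) {Q : Set ℂ} (hQ : MeasurableSet Q) (x : ℂ) :
    cauchyComm b (Q.indicator g) x = ∫ y in Q, (b x - b y) / (x - y) * g y := by
  rw [cauchyComm, ← integral_indicator hQ]
  congr 1
  funext w
  rw [Set.indicator_mul_right]

lemma key_identity {b : ℂ → ℂ} (hb : LocallyIntegrable b volume)
    (c : ℂ) (ℓ : ℝ) (hℓ : 0 < ℓ) :
    ∀ᵐ x ∂(volume.restrict (square c ℓ)),
      (ℓ * ℓ : ℝ) • (b x - sqAvg b (square c ℓ))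
        = (x - c) * cauchyComm b ((square c ℓ).indicator (fun _ => (1:ℂ))) x
          - cauchyComm b ((square c ℓ).indicator (fun y => y - c)) x := by
  set Q := square c ℓ with hQdef
  have hQm : MeasurableSet Q := measurableSet_square c ℓ
  have hvol : (volume Q).toReal = ℓ * ℓ := by
    rw [volume_square c ℓ hℓ, toReal_ofReal (by positivity)]
  have hbQ : IntegrableOn b Q := integrableOn_square hb c ℓ hℓ
  have hfin : IsFiniteMeasure (volume.restrict Q) := by
    constructor
    rw [Measure.restrict_apply_univ, volume_square c ℓ hℓ]
    exact ofReal_lt_top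
  filter_upwards [ae_kernel_integrable hb c ℓ hℓ, ae_restrict_mem hQm] with x hk hx
  -- notation
  set k : ℂ → ℂ := fun y => (b x - b y) / (x - y) with hkdef
  have hk2 : IntegrableOn (fun y => k y * (y - c)) Q := by
    have h1 : Integrable (fun y => (Q.indicator (fun y => y - c) y) * k y)
        (volume.restrict Q) := by
      refine hk.bdd_mul (c := 2 * ℓ) ?_ (ae_of_all _ fun y => ?_)
      · exact ((measurable_id.sub measurable_const).indicator hQm).aestronglyMeasurable
      · rcases em (y ∈ Q) with hy | hy
        · rw [Set.indicator_of_mem hy]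
          exact norm_sub_le_of_mem_square hy
        · rw [Set.indicator_of_notMem hy]
          simp; positivity
    refine h1.congr ?_
    filter_upwards [ae_restrict_mem hQm] with y hy
    rw [Set.indicator_of_mem hy, mul_comm]
  have hk1 : IntegrableOn (fun y => k y * (x - c)) Q := hk.mul_const _
  -- the average identity
  have e1 : (ℓ * ℓ : ℝ) • (b x - sqAvg b Q) = ∫ y in Q, (b x - b y) := by
    rw [integral_sub (integrable_const _) hbQ, setIntegral_const, measureReal_def, sqAvg, hvol,
      smul_sub, smul_smul, mul_inv_cancel₀ (by positivity), one_smul]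
  have e2 : ∫ y in Q, (b x - b y) = ∫ y in Q, k y * ((x - c) - (y - c)) := by
    refine integral_congr_ae ?_
    have hxa : ∀ᵐ y ∂volume.restrict Q, y ≠ x := by
      refine ae_restrict_of_ae ?_
      have h0 : (volume : Measure ℂ) {x} = 0 := measure_singleton x
      filter_upwards [measure_eq_zero_iff_ae_notMem.mp h0] with y hy
      simpa using hy
    filter_upwards [hxa] with y hy
    have hne : x - y ≠ 0 := sub_ne_zero.2 (Ne.symm hy)
    rw [hkdef]
    simp only
    rw [sub_sub_sub_cancel_right, div_mul_cancel₀ _ hne]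
  have e3 : ∫ y in Q, k y * ((x - c) - (y - c))
      = (x - c) * (∫ y in Q, k y * 1) - ∫ y in Q, k y * (y - c) := by
    have : ∀ y, k y * ((x - c) - (y - c)) = k y * (x - c) - k y * (y - c) := by
      intro y; ring
    simp_rw [this]
    rw [integral_sub hk1 hk2]
    congr 1
    simp_rw [mul_one]
    rw [← integral_const_mul]
    congr 1
    funext y
    ring
  rw [e1, e2, e3, cauchyComm_indicator b _ hQm x, cauchyComm_indicator b _ hQm x]


lemma aesm_cauchyComm {b : ℂ → ℂ} (hb : LocallyIntegrable b volume) {f : ℂ → ℂ}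
    (hf : Measurable f) : AEStronglyMeasurable (cauchyComm b f) volume := by
  have hb' := hb.aestronglyMeasurable
  have h1 : AEStronglyMeasurable (fun p : ℂ × ℂ => (b p.1 - b p.2) / (p.1 - p.2) * f p.2)
      ((volume : Measure ℂ).prod volume) := by
    simp_rw [div_eq_mul_inv]
    refine AEStronglyMeasurable.mul ?_ (hf.comp measurable_snd).aestronglyMeasurable
    refine AEStronglyMeasurable.mul ?_
      ((measurable_fst.sub measurable_snd).inv).aestronglyMeasurable
    exact (hb'.comp_quasiMeasurePreserving Measure.quasiMeasurePreserving_fst).sub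
      (hb'.comp_quasiMeasurePreserving Measure.quasiMeasurePreserving_snd)
  exact h1.integral_prod_right'

lemma holder_step {g : ℂ → ℂ} (hg : AEStronglyMeasurable g volume)
    {Q : Set ℂ} {q : ℝ} (hq : 1 ≤ q) :
    ∫⁻ z in Q, (‖g z‖₊ : ℝ≥0∞)
      ≤ eLpNorm g (ENNReal.ofReal q) volume * (volume Q) ^ (1 - 1/q) := by
  have h1 : (1 : ℝ≥0∞) ≤ ENNReal.ofReal q := by
    rw [ENNReal.one_le_ofReal]; exact hq
  have := eLpNorm_le_eLpNorm_mul_rpow_measure_univ (μ := volume.restrict Q) h1 hg.restrict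
  rw [eLpNorm_one_eq_lintegral_enorm] at this
  refine le_trans this ?_
  rw [Measure.restrict_apply_univ, ENNReal.toReal_one,
    ENNReal.toReal_ofReal (le_trans zero_le_one hq),
    show (1:ℝ)/1 - 1/q = 1 - 1/q by norm_num]
  exact mul_le_mul' (eLpNorm_mono_measure _ Measure.restrict_le_self) le_rfl

end Aux

open Set Metric in
theorem oscillation_bound_of_bounded_comm (p q β K : ℝ)
    (hp : 1 < p) (hp2 : p < 2) (hq : 2 < q)
    (hβ : β / 2 = 1 / p - 1 / q - 1 / 2) (hβ0 : 0 ≤ β) (hK : 0 ≤ K)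
    (b : ℂ → ℂ) (hb : LocallyIntegrable b volume)
    (hbound : ∀ f : ℂ → ℂ,
      eLpNorm (cauchyComm b f) (ENNReal.ofReal q) volume ≤
        ENNReal.ofReal K * eLpNorm f (ENNReal.ofReal p) volume) :
    ∃ C : ℝ, 0 < C ∧ ∀ (c : ℂ) (ℓ : ℝ), 0 < ℓ →
      (volume (square c ℓ)).toReal⁻¹ * ∫ z in square c ℓ, ‖b z - sqAvg b (square c ℓ)‖ ≤
        C * K * (volume (square c ℓ)).toReal ^ (β / 2) := by
  refine ⟨5, by norm_num, fun c ℓ hℓ => ?_⟩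
  set Q := square c ℓ with hQdef
  have hQm : MeasurableSet Q := measurableSet_square c ℓ
  have hℓℓ : (0:ℝ) < ℓ * ℓ := by positivity
  have hvol : volume Q = ENNReal.ofReal (ℓ * ℓ) := volume_square c ℓ hℓ
  have hvt : (volume Q).toReal = ℓ * ℓ := by rw [hvol, toReal_ofReal hℓℓ.le]
  have hbQ : IntegrableOn b Q := integrableOn_square hb c ℓ hℓ
  set V := ENNReal.ofReal (ℓ * ℓ) with hV
  have hV0 : V ≠ 0 := by
    rw [hV]; exact (ENNReal.ofReal_pos.2 hℓℓ).ne'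
  have hVtop : V ≠ ⊤ := ofReal_ne_top
  set f₁ : ℂ → ℂ := Q.indicator (fun _ => (1:ℂ)) with hf₁
  set f₂ : ℂ → ℂ := Q.indicator (fun y => y - c) with hf₂
  have hp0 : (0:ℝ) < p := lt_trans one_pos hp
  have hq1 : (1:ℝ) ≤ q := by linarith
  have hpne : ENNReal.ofReal p ≠ 0 := (ENNReal.ofReal_pos.2 hp0).ne'
  have hn1 : eLpNorm f₁ (ENNReal.ofReal p) volume = V ^ (1/p) := by
    rw [hf₁, eLpNorm_indicator_const hQm hpne ofReal_ne_top, hvol,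
      toReal_ofReal hp0.le]
    simp [← hV]
  have hn2 : eLpNorm f₂ (ENNReal.ofReal p) volume ≤ ENNReal.ofReal (2*ℓ) * V ^ (1/p) := by
    have hmono : ∀ z, ‖f₂ z‖ ≤ ‖Q.indicator (fun _ => (2*ℓ:ℝ)) z‖ := by
      intro z
      rcases em (z ∈ Q) with hz | hz
      · rw [hf₂, Set.indicator_of_mem hz, Set.indicator_of_mem hz,
          Real.norm_of_nonneg (by positivity)]
        exact norm_sub_le_of_mem_square hz
      · rw [hf₂, Set.indicator_of_notMem hz, Set.indicator_of_notMem hz]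
        simp
    refine le_trans (eLpNorm_mono hmono) ?_
    rw [eLpNorm_indicator_const hQm hpne ofReal_ne_top, hvol, toReal_ofReal hp0.le,
      Real.enorm_eq_ofReal (by positivity)]
  have hg1 : AEStronglyMeasurable (cauchyComm b f₁) volume :=
    aesm_cauchyComm hb (measurable_const.indicator hQm)
  have hg2 : AEStronglyMeasurable (cauchyComm b f₂) volume :=
    aesm_cauchyComm hb ((measurable_id.sub measurable_const).indicator hQm)
  have key : ∀ᵐ x ∂volume.restrict Q,
      V * (‖b x - sqAvg b Q‖₊ : ℝ≥0∞)
        ≤ ENNReal.ofReal (2*ℓ) * (‖cauchyComm b f₁ x‖₊ : ℝ≥0∞)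
          + (‖cauchyComm b f₂ x‖₊ : ℝ≥0∞) := by
    filter_upwards [key_identity hb c ℓ hℓ, ae_restrict_mem hQm] with x hid hx
    have hre : (ℓ*ℓ) * ‖b x - sqAvg b Q‖
        ≤ (2*ℓ) * ‖cauchyComm b f₁ x‖ + ‖cauchyComm b f₂ x‖ := by
      have h1 : (ℓ*ℓ) * ‖b x - sqAvg b Q‖ = ‖(ℓ*ℓ:ℝ) • (b x - sqAvg b Q)‖ := by
        rw [norm_smul, Real.norm_of_nonneg hℓℓ.le]
      rw [h1, hid]
      calc ‖(x - c) * cauchyComm b f₁ x - cauchyComm b f₂ x‖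
          ≤ ‖(x - c) * cauchyComm b f₁ x‖ + ‖cauchyComm b f₂ x‖ := norm_sub_le _ _
        _ ≤ (2*ℓ) * ‖cauchyComm b f₁ x‖ + ‖cauchyComm b f₂ x‖ := by
            rw [norm_mul]
            gcongr
            exact norm_sub_le_of_mem_square hx
    calc V * (‖b x - sqAvg b Q‖₊ : ℝ≥0∞)
        = ENNReal.ofReal ((ℓ*ℓ) * ‖b x - sqAvg b Q‖) := by
          rw [ENNReal.ofReal_mul hℓℓ.le, ofReal_norm, enorm_eq_nnnorm, hV]
      _ ≤ ENNReal.ofReal ((2*ℓ) * ‖cauchyComm b f₁ x‖ + ‖cauchyComm b f₂ x‖) :=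
          ofReal_le_ofReal hre
      _ ≤ _ := by
          rw [ENNReal.ofReal_add (by positivity) (norm_nonneg _),
            ENNReal.ofReal_mul (by positivity),
            ofReal_norm, ofReal_norm, enorm_eq_nnnorm, enorm_eq_nnnorm]
  set I := ∫⁻ x in Q, (‖b x - sqAvg b Q‖₊ : ℝ≥0∞) with hI
  have hmain : V * I ≤ ENNReal.ofReal (2*ℓ) * (∫⁻ x in Q, (‖cauchyComm b f₁ x‖₊ : ℝ≥0∞))
      + ∫⁻ x in Q, (‖cauchyComm b f₂ x‖₊ : ℝ≥0∞) := by
    rw [hI, ← lintegral_const_mul' _ _ hVtop]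
    refine le_trans (lintegral_mono_ae key) ?_
    simp only [← enorm_eq_nnnorm]
    rw [lintegral_add_left' ((hg1.restrict.enorm).const_mul _),
      lintegral_const_mul' _ _ ofReal_ne_top]
  have hA1 : ∫⁻ x in Q, (‖cauchyComm b f₁ x‖₊ : ℝ≥0∞)
      ≤ ENNReal.ofReal K * V ^ (1/p) * V ^ (1 - 1/q) := by
    refine le_trans (holder_step hg1 hq1) ?_
    rw [hvol]
    exact mul_le_mul' (le_trans (hbound f₁) (le_of_eq (by rw [hn1]))) le_rfl
  have hA2 : ∫⁻ x in Q, (‖cauchyComm b f₂ x‖₊ : ℝ≥0∞)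
      ≤ ENNReal.ofReal K * (ENNReal.ofReal (2*ℓ) * V ^ (1/p)) * V ^ (1 - 1/q) := by
    refine le_trans (holder_step hg2 hq1) ?_
    rw [hvol]
    exact mul_le_mul' (le_trans (hbound f₂) (mul_le_mul' le_rfl hn2)) le_rfl
  set W := ENNReal.ofReal (2*ℓ) * ENNReal.ofReal K * (V ^ (1/p) * V ^ (1 - 1/q)) with hW
  have hcomb : V * I ≤ 2 * W := by
    refine le_trans hmain (le_trans (add_le_add (mul_le_mul' le_rfl hA1) hA2)
      (le_of_eq ?_))
    rw [hW]; ring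
  have hpow : V ^ (1/p) * V ^ (1 - 1/q) = V * V ^ (1/p - 1/q) := by
    rw [← ENNReal.rpow_add _ _ hV0 hVtop]
    nth_rewrite 2 [← ENNReal.rpow_one V]
    rw [← ENNReal.rpow_add _ _ hV0 hVtop]
    congr 1
    ring
  have hI2 : I ≤ 2 * (ENNReal.ofReal (2*ℓ) * ENNReal.ofReal K * V ^ (1/p - 1/q)) := by
    have h' : V * I ≤ V * (2 * (ENNReal.ofReal (2*ℓ) * ENNReal.ofReal K
        * V ^ (1/p - 1/q))) := by
      refine le_trans hcomb (le_of_eq ?_)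
      rw [hW, hpow]; ring
    exact (ENNReal.mul_le_mul_iff_right hV0 hVtop).1 h'
  -- pass to real numbers
  have hint : Integrable (fun z => b z - sqAvg b Q) (volume.restrict Q) := by
    have : IsFiniteMeasure (volume.restrict Q) := by
      constructor
      rw [Measure.restrict_apply_univ, hvol]
      exact ofReal_lt_top
    exact hbQ.sub (integrable_const _)
  have hIr : ∫ z in Q, ‖b z - sqAvg b Q‖ = I.toReal := by
    rw [hI]
    simp only [← enorm_eq_nnnorm]
    rw [← ofReal_integral_norm_eq_lintegral_enorm hint,
      toReal_ofReal (integral_nonneg (fun z => norm_nonneg _))]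
  have hexp : (0:ℝ) ≤ 1/p - 1/q := by
    have h' : 1/q < 1/p := one_div_lt_one_div_of_lt hp0 (lt_trans hp2 hq)
    linarith
  have hRHSne : 2 * (ENNReal.ofReal (2*ℓ) * ENNReal.ofReal K * V ^ (1/p - 1/q)) ≠ ⊤ := by
    refine ENNReal.mul_ne_top (by simp) (ENNReal.mul_ne_top
      (ENNReal.mul_ne_top ofReal_ne_top ofReal_ne_top) ?_)
    exact (ENNReal.rpow_lt_top_of_nonneg hexp hVtop).ne
  rw [hvt, hIr]
  set A := (ℓ*ℓ:ℝ) ^ (1/p - 1/q) with hA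
  have hA0 : (0:ℝ) ≤ A := Real.rpow_nonneg hℓℓ.le _
  have hIle : I.toReal ≤ 4 * ℓ * K * A := by
    refine le_trans (ENNReal.toReal_mono hRHSne hI2) (le_of_eq ?_)
    rw [ENNReal.toReal_mul, ENNReal.toReal_mul, ENNReal.toReal_mul, ENNReal.toReal_ofNat,
      ENNReal.toReal_ofReal (by positivity : (0:ℝ) ≤ 2*ℓ), ENNReal.toReal_ofReal hK,
      hV, ← ENNReal.toReal_rpow, ENNReal.toReal_ofReal hℓℓ.le, hA]
    ring
  have hhalf : (ℓ*ℓ:ℝ) ^ (β/2) = A * ℓ⁻¹ := by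
    have hsq : ((ℓ*ℓ:ℝ)) ^ ((1:ℝ)/2) = ℓ := by
      rw [← Real.sqrt_eq_rpow]; exact Real.sqrt_mul_self hℓ.le
    rw [hβ, show (1/p - 1/q - 1/2 : ℝ) = (1/p - 1/q) + (-(1/2)) by ring,
      Real.rpow_add hℓℓ, ← hA]
    congr 1
    rw [show (-(1/2):ℝ) = -((1:ℝ)/2) by norm_num, Real.rpow_neg hℓℓ.le, hsq]
  rw [hhalf]
  have h1 : (ℓ*ℓ:ℝ)⁻¹ * I.toReal ≤ (ℓ*ℓ)⁻¹ * (4*ℓ*K*A) :=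
    mul_le_mul_of_nonneg_left hIle (by positivity)
  refine le_trans h1 ?_
  have h2 : (ℓ*ℓ:ℝ)⁻¹ * (4*ℓ*K*A) = (4*K)*(A*ℓ⁻¹) := by
    field_simp
  rw [h2, show (5:ℝ)*K*(A*ℓ⁻¹) = (5*K)*(A*ℓ⁻¹) by ring]
  exact mul_le_mul_of_nonneg_right (by linarith) (by positivity)
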